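/- Under Assumptions (i)–(iv) on Φ (lower bound Φ ≥ M − α₁‖u‖_X, local boundedness above, local Lipschitz in u, and Lipschitz in y with constant exp(α₂‖u‖_X + C)), and with μ₀ a (κ, X^{s,q}) Besov prior with s > t + d/q and κ > 2 c_e r*(α₁ + 2α₂) where C^t embeds continuously in X with constant c_e, the posterior measures μ^y defined by dμ^y/dμ₀ ∝ exp(−Φ(u;y)) satisfy d_Hell(μ^y, μ^{y'}) ≤ C(r)‖y − y'‖_Y for all ‖y‖_Y, ‖y'‖_Y ≤ r. -/

import Mathlib

set_option maxHeartbeats 1000000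

open MeasureTheory Real

lemma my_sq_add_le (a b : ℝ) : (a + b)^2 ≤ 2*a^2 + 2*b^2 := by
  nlinarith [sq_nonneg (a - b)]

lemma my_exp_sq (x : ℝ) : (Real.exp x)^2 = Real.exp (2*x) := by
  rw [sq, ← Real.exp_add]; ring_nf

lemma my_exp_lip {s t c : ℝ} (hs : s ≤ c) (ht : t ≤ c) :
    |Real.exp s - Real.exp t| ≤ Real.exp c * |s - t| := by
  wlog h : t ≤ s generalizing s t
  · rw [abs_sub_comm, abs_sub_comm s t]; exact this ht hs (le_of_not_ge h)
  rw [abs_of_nonneg (sub_nonneg.2 (Real.exp_le_exp.2 h)), abs_of_nonneg (sub_nonneg.2 h)]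
  have h2 : Real.exp s * (t - s + 1) ≤ Real.exp t := by
    calc Real.exp s * (t - s + 1) ≤ Real.exp s * Real.exp (t - s) :=
          mul_le_mul_of_nonneg_left (Real.add_one_le_exp (t - s)) (Real.exp_nonneg s)
      _ = Real.exp t := by rw [← Real.exp_add]; ring_nf
  have h3 : Real.exp s ≤ Real.exp c := Real.exp_le_exp.2 hs
  nlinarith [Real.exp_pos s, Real.exp_pos c]

lemma my_inv_sqrt_lip {c x y : ℝ} (hc : 0 < c) (hx : c ≤ x) (hy : c ≤ y) :
    |1 / Real.sqrt x - 1 / Real.sqrt y| ≤ |x - y| / (2 * c * Real.sqrt c) := by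
  have hsc : 0 < Real.sqrt c := Real.sqrt_pos.2 hc
  have hsx : Real.sqrt c ≤ Real.sqrt x := Real.sqrt_le_sqrt hx
  have hsy : Real.sqrt c ≤ Real.sqrt y := Real.sqrt_le_sqrt hy
  have hx0 : 0 < Real.sqrt x := lt_of_lt_of_le hsc hsx
  have hy0 : 0 < Real.sqrt y := lt_of_lt_of_le hsc hsy
  have hxx : Real.sqrt x * Real.sqrt x = x := Real.mul_self_sqrt (hc.le.trans hx)
  have hyy : Real.sqrt y * Real.sqrt y = y := Real.mul_self_sqrt (hc.le.trans hy)
  have hdpos : 0 < Real.sqrt x * Real.sqrt y * (Real.sqrt x + Real.sqrt y) := by positivity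
  have key : 1 / Real.sqrt x - 1 / Real.sqrt y
      = (y - x) / (Real.sqrt x * Real.sqrt y * (Real.sqrt x + Real.sqrt y)) := by
    rw [eq_div_iff hdpos.ne']
    field_simp
    nlinarith [hxx, hyy]
  rw [key, abs_div, abs_of_pos hdpos, abs_sub_comm y x]
  apply div_le_div_of_nonneg_left (abs_nonneg _) (by positivity)
  nlinarith [hsx, hsy, hsc.le, hx0.le, hy0.le]

theorem posterior_wellposed_hellinger
    {X Y : Type*} [NormedAddCommGroup X] [NormedAddCommGroup Y] [MeasurableSpace X]
    (μ0 : Measure X) [IsProbabilityMeasure μ0]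
    (Φ : X → Y → ℝ) (hΦmeas : ∀ y, Measurable fun u => Φ u y)
    (α₁ α₂ : ℝ) (hα₁ : 0 ≤ α₁) (hα₂ : 0 ≤ α₂)
    -- Assumption (i)
    (M : ℝ → ℝ) (h1 : ∀ r : ℝ, ∀ u y, ‖y‖ < r → M r - α₁ * ‖u‖ ≤ Φ u y)
    -- Assumption (ii)
    (K : ℝ → ℝ) (h2 : ∀ r : ℝ, ∀ u y, ‖u‖ < r → ‖y‖ < r → Φ u y ≤ K r)
    -- Assumption (iii)
    (L : ℝ → ℝ) (h3 : ∀ r : ℝ, ∀ u₁ u₂ y, ‖u₁‖ < r → ‖u₂‖ < r → ‖y‖ < r →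
      |Φ u₁ y - Φ u₂ y| ≤ L r * ‖u₁ - u₂‖)
    -- Assumption (iv)
    (C : ℝ) (h4 : ∀ u y₁ y₂, |Φ u y₁ - Φ u y₂| ≤ Real.exp (α₂ * ‖u‖ + C) * ‖y₁ - y₂‖)
    -- Besov prior: Fernique-like exponential integrability with constants c_e, r*
    (ce rstar κ : ℝ) (hce : 0 < ce) (hrstar : 0 < rstar)
    (hκ : 2 * ce * rstar * (α₁ + 2 * α₂) < κ)
    (hFer : ∀ α : ℝ, 0 < α → α < κ / (2 * ce * rstar) →
      Integrable (fun u => Real.exp (α * ‖u‖)) μ0) :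
    ∀ r : ℝ, 0 < r → ∃ Cr : ℝ, ∀ y y' : Y, ‖y‖ ≤ r → ‖y'‖ ≤ r →
      Real.sqrt ((1 / 2) * ∫ u,
        (Real.sqrt (Real.exp (-Φ u y) / ∫ v, Real.exp (-Φ v y) ∂μ0)
          - Real.sqrt (Real.exp (-Φ u y') / ∫ v, Real.exp (-Φ v y') ∂μ0)) ^ 2 ∂μ0)
      ≤ Cr * ‖y - y'‖ := by
  intro r hr
  have hβ0 : (0:ℝ) ≤ α₁ + 2*α₂ := by linarith
  set β := α₁ + 2*α₂ with hβdef
  have hden : (0:ℝ) < 2*ce*rstar := by positivity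
  have hκ0 : 0 < κ := lt_of_le_of_lt (mul_nonneg hden.le hβ0) hκ
  have hβlt : β < κ/(2*ce*rstar) := (lt_div_iff₀' hden).mpr hκ
  have hIβint : Integrable (fun u => Real.exp (β*‖u‖)) μ0 := by
    rcases eq_or_lt_of_le hβ0 with h | h
    · have : (fun u : X => Real.exp (β*‖u‖)) = fun _ => (1:ℝ) := by
        funext u; rw [← h]; simp
      rw [this]; exact integrable_const 1
    · exact hFer β h hβlt
  have hnorm : AEMeasurable (fun u : X => ‖u‖) μ0 := by
    set α0 := κ/(2*(2*ce*rstar)) with hα0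
    have hα0pos : 0 < α0 := by positivity
    have hα0lt : α0 < κ/(2*ce*rstar) := by
      rw [hα0]
      exact div_lt_div_of_pos_left hκ0 hden (by linarith)
    have hi := hFer α0 hα0pos hα0lt
    have haem : AEMeasurable (fun u : X => Real.exp (α0*‖u‖)) μ0 :=
      hi.aestronglyMeasurable.aemeasurable
    have h5 : AEMeasurable (fun u : X => Real.log (Real.exp (α0*‖u‖)) / α0) μ0 :=
      (Real.measurable_log.comp_aemeasurable haem).div_const α0
    have heq : (fun u : X => Real.log (Real.exp (α0*‖u‖)) / α0) = fun u : X => ‖u‖ := by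
      funext u; rw [Real.log_exp]; field_simp
    rwa [heq] at h5
  set m := M (r+1) with hm
  have hlow : ∀ (y : Y), ‖y‖ ≤ r → ∀ u, m - α₁*‖u‖ ≤ Φ u y :=
    fun y hy u => h1 (r+1) u y (by linarith)
  have hmono : ∀ (α : ℝ), α ≤ β → ∀ u : X, Real.exp (α*‖u‖) ≤ Real.exp (β*‖u‖) :=
    fun α hα u => Real.exp_le_exp.2 (mul_le_mul_of_nonneg_right hα (norm_nonneg u))
  have hint : ∀ (y : Y), ‖y‖ ≤ r → Integrable (fun u => Real.exp (-Φ u y)) μ0 := by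
    intro y hy
    apply Integrable.mono' (hIβint.const_mul (Real.exp (-m)))
      ((hΦmeas y).neg.exp.aestronglyMeasurable)
    filter_upwards with u
    rw [Real.norm_eq_abs, abs_of_nonneg (Real.exp_nonneg _)]
    have h5 := hlow y hy u
    calc Real.exp (-Φ u y) ≤ Real.exp (α₁*‖u‖ - m) := Real.exp_le_exp.2 (by linarith)
      _ = Real.exp (-m) * Real.exp (α₁*‖u‖) := by rw [← Real.exp_add]; ring_nf
      _ ≤ Real.exp (-m) * Real.exp (β*‖u‖) :=
          mul_le_mul_of_nonneg_left (hmono α₁ (by linarith) u) (Real.exp_nonneg _)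
  have hZpos : ∀ (y : Y), ‖y‖ ≤ r → 0 < ∫ v, Real.exp (-Φ v y) ∂μ0 := by
    intro y hy
    rw [integral_pos_iff_support_of_nonneg (fun u => Real.exp_nonneg _) (hint y hy)]
    have hsupp : Function.support (fun u : X => Real.exp (-Φ u y)) = Set.univ := by
      ext u; simp [Real.exp_ne_zero]
    rw [hsupp]; simp
  have hy0r : ‖(0:Y)‖ ≤ r := by simp [hr.le]
  have hwmeas : AEStronglyMeasurable
      (fun u : X => Real.exp (-Φ u 0 - Real.exp (α₂*‖u‖ + C)*r)) μ0 := by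
    apply AEMeasurable.aestronglyMeasurable
    exact Real.measurable_exp.comp_aemeasurable
      (((hΦmeas 0).aemeasurable.neg).sub
        ((Real.measurable_exp.comp_aemeasurable ((hnorm.const_mul α₂).add_const C)).mul_const r))
  have hwint : Integrable (fun u : X => Real.exp (-Φ u 0 - Real.exp (α₂*‖u‖ + C)*r)) μ0 := by
    apply Integrable.mono' (hIβint.const_mul (Real.exp (-m))) hwmeas
    filter_upwards with u
    rw [Real.norm_eq_abs, abs_of_nonneg (Real.exp_nonneg _)]
    have h5 := hlow 0 hy0r u
    have h6 : 0 ≤ Real.exp (α₂*‖u‖+C)*r := mul_nonneg (Real.exp_nonneg _) hr.le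
    calc Real.exp (-Φ u 0 - Real.exp (α₂*‖u‖ + C)*r) ≤ Real.exp (α₁*‖u‖ - m) :=
          Real.exp_le_exp.2 (by linarith)
      _ = Real.exp (-m) * Real.exp (α₁*‖u‖) := by rw [← Real.exp_add]; ring_nf
      _ ≤ Real.exp (-m) * Real.exp (β*‖u‖) :=
          mul_le_mul_of_nonneg_left (hmono α₁ (by linarith) u) (Real.exp_nonneg _)
  set Zm := ∫ u, Real.exp (-Φ u 0 - Real.exp (α₂*‖u‖ + C)*r) ∂μ0 with hZmdef
  have hZmpos : 0 < Zm := by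
    rw [hZmdef, integral_pos_iff_support_of_nonneg (fun u => Real.exp_nonneg _) hwint]
    have hsupp : Function.support (fun u : X => Real.exp (-Φ u 0 - Real.exp (α₂*‖u‖ + C)*r))
        = Set.univ := by ext u; simp [Real.exp_ne_zero]
    rw [hsupp]; simp
  have hZlb : ∀ (y : Y), ‖y‖ ≤ r → Zm ≤ ∫ v, Real.exp (-Φ v y) ∂μ0 := by
    intro y hy
    rw [hZmdef]
    apply integral_mono hwint (hint y hy)
    intro u
    apply Real.exp_le_exp.2
    have h5 := h4 u y 0
    rw [sub_zero] at h5
    have h6 : Real.exp (α₂*‖u‖+C)*‖y‖ ≤ Real.exp (α₂*‖u‖+C)*r :=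
      mul_le_mul_of_nonneg_left hy (Real.exp_nonneg _)
    have h7 := (abs_le.1 h5).2
    linarith
  set Iβ := ∫ u, Real.exp (β*‖u‖) ∂μ0 with hIβdef
  have hIβ0 : 0 ≤ Iβ := integral_nonneg fun u => Real.exp_nonneg _
  have hZub : ∀ (y : Y), ‖y‖ ≤ r → ∫ v, Real.exp (-Φ v y) ∂μ0 ≤ Real.exp (-m) * Iβ := by
    intro y hy
    rw [hIβdef, ← integral_const_mul]
    apply integral_mono (hint y hy) (hIβint.const_mul _)
    intro u
    have h5 := hlow y hy u
    calc Real.exp (-Φ u y) ≤ Real.exp (α₁*‖u‖ - m) := Real.exp_le_exp.2 (by linarith)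
      _ = Real.exp (-m) * Real.exp (α₁*‖u‖) := by rw [← Real.exp_add]; ring_nf
      _ ≤ Real.exp (-m) * Real.exp (β*‖u‖) :=
          mul_le_mul_of_nonneg_left (hmono α₁ (by linarith) u) (Real.exp_nonneg _)
  set D := Real.exp (C - m) * Iβ with hDdef
  have hD0 : 0 ≤ D := mul_nonneg (Real.exp_nonneg _) hIβ0
  have hZdiff : ∀ y y' : Y, ‖y‖ ≤ r → ‖y'‖ ≤ r →
      |(∫ v, Real.exp (-Φ v y) ∂μ0) - ∫ v, Real.exp (-Φ v y') ∂μ0| ≤ D * ‖y - y'‖ := by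
    intro y y' hy hy'
    rw [← integral_sub (hint y hy) (hint y' hy')]
    have step1 : |∫ v, (Real.exp (-Φ v y) - Real.exp (-Φ v y')) ∂μ0|
        ≤ ∫ v, |Real.exp (-Φ v y) - Real.exp (-Φ v y')| ∂μ0 := by
      simpa [Real.norm_eq_abs] using
        norm_integral_le_integral_norm (fun v => Real.exp (-Φ v y) - Real.exp (-Φ v y'))
          (μ := μ0)
    refine step1.trans ?_
    have step2 : ∫ v, |Real.exp (-Φ v y) - Real.exp (-Φ v y')| ∂μ0
        ≤ ∫ v, (Real.exp (C - m) * ‖y - y'‖) * Real.exp (β*‖v‖) ∂μ0 := by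
      apply integral_mono_of_nonneg (Filter.Eventually.of_forall fun v => abs_nonneg _)
        (hIβint.const_mul _)
      filter_upwards with v
      have hl1 := hlow y hy v
      have hl2 := hlow y' hy' v
      have he := my_exp_lip (s := -Φ v y) (t := -Φ v y') (c := α₁*‖v‖ - m)
        (by linarith) (by linarith)
      have h5 := h4 v y y'
      have hee : Real.exp (α₁*‖v‖ - m) * Real.exp (α₂*‖v‖ + C)
          = Real.exp (C-m) * Real.exp ((α₁+α₂)*‖v‖) := by
        rw [← Real.exp_add, ← Real.exp_add]; congr 1; ring
      calc |Real.exp (-Φ v y) - Real.exp (-Φ v y')|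
          ≤ Real.exp (α₁*‖v‖ - m) * |(-Φ v y) - (-Φ v y')| := he
        _ = Real.exp (α₁*‖v‖ - m) * |Φ v y - Φ v y'| := by
            rw [show (-Φ v y) - (-Φ v y') = -(Φ v y - Φ v y') by ring, abs_neg]
        _ ≤ Real.exp (α₁*‖v‖ - m) * (Real.exp (α₂*‖v‖ + C) * ‖y - y'‖) :=
            mul_le_mul_of_nonneg_left h5 (Real.exp_nonneg _)
        _ = (Real.exp (C-m) * ‖y - y'‖) * Real.exp ((α₁+α₂)*‖v‖) := by
            rw [← mul_assoc, hee]; ring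
        _ ≤ (Real.exp (C-m) * ‖y - y'‖) * Real.exp (β*‖v‖) :=
            mul_le_mul_of_nonneg_left (hmono _ (by rw [hβdef]; linarith) v)
              (mul_nonneg (Real.exp_nonneg _) (norm_nonneg _))
    refine step2.trans ?_
    rw [integral_const_mul, ← hIβdef, hDdef]; ring_nf
    exact le_refl _
  -- the Lipschitz constant
  refine ⟨Real.sqrt (Real.exp (2*C - m) * Iβ / (4*Zm)
      + (Real.exp (-m)*Iβ) * D^2 / (4*Zm^3)), ?_⟩
  intro y y' hy hy'
  have hZyp : 0 < ∫ v, Real.exp (-Φ v y) ∂μ0 := hZpos y hy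
  have hZy'p : 0 < ∫ v, Real.exp (-Φ v y') ∂μ0 := hZpos y' hy'
  have hZylb := hZlb y hy
  have hZy'lb := hZlb y' hy'
  have hZy'ub := hZub y' hy'
  have hzdiff := hZdiff y y' hy hy'
  set Δ := ‖y - y'‖ with hΔdef
  have hΔ0 : 0 ≤ Δ := norm_nonneg _
  set Zy := ∫ v, Real.exp (-Φ v y) ∂μ0 with hZydef
  set Zy' := ∫ v, Real.exp (-Φ v y') ∂μ0 with hZy'def
  set s := 1/Real.sqrt Zy - 1/Real.sqrt Zy' with hsdef
  have hZm3 : (0:ℝ) < 4*Zm^3 := by linarith [pow_pos hZmpos 3]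
  have hsbound : s^2 ≤ D^2*Δ^2/(4*Zm^3) := by
    have h5 : |s| ≤ |Zy - Zy'| / (2*Zm*Real.sqrt Zm) := my_inv_sqrt_lip hZmpos hZylb hZy'lb
    have h6 : |s| ≤ (D*Δ)/(2*Zm*Real.sqrt Zm) := by
      refine h5.trans ?_
      gcongr
    have hden2 : (2*Zm*Real.sqrt Zm)^2 = 4*Zm^3 := by
      rw [mul_pow, mul_pow, Real.sq_sqrt hZmpos.le]; ring
    calc s^2 = |s|^2 := (sq_abs s).symm
      _ ≤ ((D*Δ)/(2*Zm*Real.sqrt Zm))^2 := pow_le_pow_left₀ (abs_nonneg s) h6 2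
      _ = D^2*Δ^2/(4*Zm^3) := by rw [div_pow, hden2, mul_pow]
  have hpt : ∀ u, (Real.sqrt (Real.exp (-Φ u y)/Zy) - Real.sqrt (Real.exp (-Φ u y')/Zy'))^2
      ≤ 2*(Real.exp (2*C-m)*Δ^2/(4*Zm)) * Real.exp (β*‖u‖) + 2*s^2*Real.exp (-Φ u y') := by
    intro u
    have hsq : ∀ (t Z : ℝ), Real.sqrt (Real.exp t / Z) = Real.exp (t/2) * (Real.sqrt Z)⁻¹ := by
      intro t Z
      rw [Real.sqrt_div (Real.exp_nonneg t) Z, ← Real.exp_half, div_eq_mul_inv]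
    rw [hsq, hsq]
    set p := Real.exp ((-Φ u y)/2) - Real.exp ((-Φ u y')/2) with hpdef
    set q := Real.exp ((-Φ u y')/2) with hqdef
    set i := (Real.sqrt Zy)⁻¹ with hidef
    set j := (Real.sqrt Zy')⁻¹ with hjdef
    have hij : i - j = s := by rw [hidef, hjdef, hsdef, one_div, one_div]
    have hfid : Real.exp ((-Φ u y)/2) * i - Real.exp ((-Φ u y')/2) * j = p*i + q*s := by
      rw [← hij, hpdef, hqdef]; ring
    rw [hfid]
    have hl1 := hlow y hy u
    have hl2 := hlow y' hy' u
    have hpb : |p| ≤ Real.exp ((α₁*‖u‖-m)/2) * (Real.exp (α₂*‖u‖+C) * Δ / 2) := by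
      have he := my_exp_lip (s := (-Φ u y)/2) (t := (-Φ u y')/2) (c := (α₁*‖u‖-m)/2)
        (by linarith) (by linarith)
      have habs : |(-Φ u y)/2 - (-Φ u y')/2| = |Φ u y - Φ u y'|/2 := by
        rw [show (-Φ u y)/2 - (-Φ u y')/2 = -((Φ u y - Φ u y')/2) by ring, abs_neg, abs_div]
        norm_num
      rw [hpdef]
      calc |Real.exp ((-Φ u y)/2) - Real.exp ((-Φ u y')/2)|
          ≤ Real.exp ((α₁*‖u‖-m)/2) * |(-Φ u y)/2 - (-Φ u y')/2| := he
        _ = Real.exp ((α₁*‖u‖-m)/2) * (|Φ u y - Φ u y'|/2) := by rw [habs]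
        _ ≤ Real.exp ((α₁*‖u‖-m)/2) * (Real.exp (α₂*‖u‖+C) * Δ / 2) := by
            have h5 := h4 u y y'
            apply mul_le_mul_of_nonneg_left _ (Real.exp_nonneg _)
            rw [← hΔdef] at h5
            linarith
    have hp2 : p^2 ≤ Real.exp (2*C-m) * Real.exp (β*‖u‖) * Δ^2 / 4 := by
      have h6 : p^2 ≤ (Real.exp ((α₁*‖u‖-m)/2) * (Real.exp (α₂*‖u‖+C) * Δ / 2))^2 := by
        rw [← sq_abs p]; exact pow_le_pow_left₀ (abs_nonneg p) hpb 2
      refine h6.trans_eq ?_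
      have hee : Real.exp ((α₁*‖u‖-m)/2) ^ 2 * Real.exp (α₂*‖u‖+C) ^ 2
          = Real.exp (2*C-m) * Real.exp (β*‖u‖) := by
        rw [my_exp_sq, my_exp_sq, ← Real.exp_add, ← Real.exp_add]
        congr 1; rw [hβdef]; ring
      linear_combination (Δ^2/4) * hee
    have hq2 : q^2 = Real.exp (-Φ u y') := by
      rw [hqdef, my_exp_sq]; congr 1; ring
    have h7 : (p*i + q*s)^2 ≤ 2*(p*i)^2 + 2*(q*s)^2 := my_sq_add_le (p*i) (q*s)
    have hi2 : i^2 ≤ 1/Zm := by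
      rw [hidef, inv_pow, Real.sq_sqrt hZyp.le, one_div]
      exact inv_anti₀ hZmpos hZylb
    have h8 : (p*i)^2 ≤ (Real.exp (2*C-m) * Real.exp (β*‖u‖) * Δ^2/4) * (1/Zm) := by
      rw [mul_pow]
      exact mul_le_mul hp2 hi2 (sq_nonneg i) (by positivity)
    have h9 : (q*s)^2 = Real.exp (-Φ u y') * s^2 := by rw [mul_pow, hq2]
    calc (p*i + q*s)^2 ≤ 2*(p*i)^2 + 2*(q*s)^2 := h7
      _ ≤ 2*((Real.exp (2*C-m) * Real.exp (β*‖u‖) * Δ^2/4) * (1/Zm))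
          + 2*(Real.exp (-Φ u y') * s^2) := by rw [h9]; linarith [h8]
      _ = 2*(Real.exp (2*C-m)*Δ^2/(4*Zm))*Real.exp (β*‖u‖) + 2*s^2*Real.exp (-Φ u y') := by
          ring
  have hIle : (∫ u, (Real.sqrt (Real.exp (-Φ u y)/Zy)
        - Real.sqrt (Real.exp (-Φ u y')/Zy'))^2 ∂μ0)
      ≤ 2*(Real.exp (2*C-m)*Δ^2/(4*Zm))*Iβ + 2*s^2*Zy' := by
    have hstep : (∫ u, (Real.sqrt (Real.exp (-Φ u y)/Zy)
          - Real.sqrt (Real.exp (-Φ u y')/Zy'))^2 ∂μ0)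
        ≤ ∫ u, (2*(Real.exp (2*C-m)*Δ^2/(4*Zm)) * Real.exp (β*‖u‖)
            + 2*s^2*Real.exp (-Φ u y')) ∂μ0 := by
      apply integral_mono_of_nonneg (Filter.Eventually.of_forall fun u => sq_nonneg _)
        ((hIβint.const_mul _).add ((hint y' hy').const_mul _))
      exact Filter.Eventually.of_forall hpt
    refine hstep.trans_eq ?_
    rw [integral_add (hIβint.const_mul _) ((hint y' hy').const_mul _),
      integral_const_mul, integral_const_mul, ← hIβdef, ← hZy'def]
  have h10 : s^2 * Zy' ≤ (D^2*Δ^2/(4*Zm^3)) * (Real.exp (-m)*Iβ) :=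
    mul_le_mul hsbound hZy'ub hZy'p.le (by positivity)
  have hfin : (1/2 : ℝ) * (∫ u, (Real.sqrt (Real.exp (-Φ u y)/Zy)
        - Real.sqrt (Real.exp (-Φ u y')/Zy'))^2 ∂μ0)
      ≤ (Real.exp (2*C - m) * Iβ / (4*Zm) + (Real.exp (-m)*Iβ) * D^2 / (4*Zm^3)) * Δ^2 := by
    have heq1 : (1:ℝ)/2 * (2*(Real.exp (2*C-m)*Δ^2/(4*Zm))*Iβ + 2*s^2*Zy')
        = Real.exp (2*C-m)*Iβ/(4*Zm)*Δ^2 + s^2*Zy' := by ring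
    have heq2 : (D^2*Δ^2/(4*Zm^3)) * (Real.exp (-m)*Iβ)
        = (Real.exp (-m)*Iβ) * D^2 / (4*Zm^3) * Δ^2 := by ring
    have h11 : (1/2 : ℝ) * (∫ u, (Real.sqrt (Real.exp (-Φ u y)/Zy)
          - Real.sqrt (Real.exp (-Φ u y')/Zy'))^2 ∂μ0)
        ≤ (1:ℝ)/2 * (2*(Real.exp (2*C-m)*Δ^2/(4*Zm))*Iβ + 2*s^2*Zy') := by
      apply mul_le_mul_of_nonneg_left hIle (by norm_num)
    rw [heq1] at h11
    rw [heq2] at h10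
    linarith [h10, h11]
  have hK0 : (0:ℝ) ≤ Real.exp (2*C - m) * Iβ / (4*Zm) + (Real.exp (-m)*Iβ) * D^2 / (4*Zm^3) := by
    apply add_nonneg
    · exact div_nonneg (mul_nonneg (Real.exp_nonneg _) hIβ0) (by linarith)
    · exact div_nonneg (mul_nonneg (mul_nonneg (Real.exp_nonneg _) hIβ0) (sq_nonneg D))
        hZm3.le
  calc Real.sqrt ((1/2) * ∫ u, (Real.sqrt (Real.exp (-Φ u y)/Zy)
        - Real.sqrt (Real.exp (-Φ u y')/Zy'))^2 ∂μ0)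
      ≤ Real.sqrt ((Real.exp (2*C - m) * Iβ / (4*Zm)
          + (Real.exp (-m)*Iβ) * D^2 / (4*Zm^3)) * Δ^2) := Real.sqrt_le_sqrt hfin
    _ = Real.sqrt (Real.exp (2*C - m) * Iβ / (4*Zm)
          + (Real.exp (-m)*Iβ) * D^2 / (4*Zm^3)) * Δ := by
        rw [Real.sqrt_mul hK0, Real.sqrt_sq hΔ0]
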